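/- (Domination via soft local times; Corollary c:couplesystem) In the soft local time construction: given densities (g_j)_{j=1}^{J} on Σ with ∫ g_j dμ = 1 and the associated quantities ξ_j, G_j, and indices i_j for j = 1,…,J, one has for every ζ > 0 that Q[ ∑_{j≤J} δ_{z_{i_j}} ≤ ∑_{i : v_i < ζ} δ_{z_i} ] ≥ Q[ G_J(z) ≤ ζ for all z ∈ Σ ]. In particular, on the event that the soft local time G_J stays below ζ everywhere, the J simulated points are dominated by the Poisson point process of intensity ζ·μ obtained by keeping the points (z_i) with v_i < ζ. -/

import Mathlib

open MeasureTheory ENNReal ProbabilityTheory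

/-- `(Q, z, v)` represents a Poisson point process `m = ∑ᵢ δ_{(zᵢ, vᵢ)}` on `E × ℝ₊` with
intensity `μ ⊗ dv`, realized on the probability space `(Ω, Q)`: the points are a.s. distinct
with nonnegative second coordinates, counts of points in measurable sets of finite intensity
are Poisson distributed with the corresponding rate, and counts in disjoint sets are
independent. -/
structure IsPPP {E : Type*} [MeasurableSpace E] {Ω : Type*} [MeasurableSpace Ω]
    (Q : Measure Ω) (z : ℕ → Ω → E) (v : ℕ → Ω → ℝ) (μ : Measure E) : Prop where
  meas_z : ∀ i, Measurable (z i)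
  meas_v : ∀ i, Measurable (v i)
  nonneg : ∀ᵐ ω ∂Q, ∀ i, 0 ≤ v i ω
  distinct : ∀ᵐ ω ∂Q, ∀ i j, i ≠ j → (z i ω, v i ω) ≠ (z j ω, v j ω)
  count : ∀ A : Set (E × ℝ), MeasurableSet A →
    (μ.prod (volume.restrict (Set.Ici (0 : ℝ)))) A < ⊤ →
    ∀ n : ℕ,
      Q {ω | {i : ℕ | (z i ω, v i ω) ∈ A}.encard = (n : ℕ∞)}
        = ENNReal.ofReal
            (poissonPMFReal ((μ.prod (volume.restrict (Set.Ici (0 : ℝ)))) A).toNNReal n)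
  indep : ∀ (N : ℕ) (A : Fin N → Set (E × ℝ)), (∀ a, MeasurableSet (A a)) →
    Pairwise (Function.onFun Disjoint A) → ∀ f : Fin N → ℕ,
      Q (⋂ a, {ω | {i : ℕ | (z i ω, v i ω) ∈ A a}.encard = (f a : ℕ∞)})
        = ∏ a, Q {ω | {i : ℕ | (z i ω, v i ω) ∈ A a}.encard = (f a : ℕ∞)}

/-- The soft local time construction: `softLT g z v k = (ξ_k, G_k)` where
`ξ_k = inf{ t ≥ 0 : for at least k indices i, v i ≤ t·g_k(z_i) + G_{k-1}(z_i) }` and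
`G_k = G_{k-1} + ξ_k · g_k` (with `G_0 = 0` and the convention `ξ_0 = 0`). -/
noncomputable def softLT {E : Type*} (g : ℕ → E → ℝ) (z : ℕ → E) (v : ℕ → ℝ) :
    ℕ → ℝ × (E → ℝ)
  | 0 => (0, fun _ => 0)
  | k + 1 =>
    let G := (softLT g z v k).2
    let ξ := sInf {t : ℝ | 0 ≤ t ∧
      ((k + 1 : ℕ) : ℕ∞) ≤ {i : ℕ | v i ≤ t * g (k + 1) (z i) + G (z i)}.encard}
    (ξ, fun x => G x + ξ * g (k + 1) x)

section basic
variable {E : Type*} (g : ℕ → E → ℝ) (z : ℕ → E) (v : ℕ → ℝ)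

lemma softLT_xi_succ (k : ℕ) : (softLT g z v (k+1)).1 = sInf {t : ℝ | 0 ≤ t ∧
    ((k + 1 : ℕ) : ℕ∞) ≤ {i : ℕ | v i ≤ t * g (k + 1) (z i) + (softLT g z v k).2 (z i)}.encard} := rfl

lemma softLT_G_succ (k : ℕ) (x : E) :
    (softLT g z v (k+1)).2 x = (softLT g z v k).2 x + (softLT g z v (k+1)).1 * g (k+1) x := rfl

lemma softLT_G_zero (x : E) : (softLT g z v 0).2 x = 0 := rfl

lemma softLT_xi_nonneg (k : ℕ) : 0 ≤ (softLT g z v k).1 := by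
  cases k with
  | zero => exact le_refl 0
  | succ k =>
    rw [softLT_xi_succ]
    exact Real.sInf_nonneg fun x hx => hx.1

variable (hg0 : ∀ j x, 0 ≤ g j x)
include hg0

lemma softLT_G_nonneg (k : ℕ) (x : E) : 0 ≤ (softLT g z v k).2 x := by
  induction k with
  | zero => exact le_refl 0
  | succ k ih =>
    rw [softLT_G_succ]
    exact add_nonneg ih (mul_nonneg (softLT_xi_nonneg g z v _) (hg0 _ _))

lemma softLT_G_mono (x : E) : Monotone fun k => (softLT g z v k).2 x := by
  apply monotone_nat_of_le_succ
  intro k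
  rw [softLT_G_succ]
  exact le_add_of_nonneg_right (mul_nonneg (softLT_xi_nonneg g z v _) (hg0 _ _))

lemma softLT_G_bound {c : ℝ} (hc : 0 ≤ c) (m : ℕ)
    (h : ∀ k, 1 ≤ k → k ≤ m → (softLT g z v k).1 ≤ c) (x : E) :
    (softLT g z v m).2 x ≤ c * ∑ k ∈ Finset.Icc 1 m, g k x := by
  induction m with
  | zero => simp [softLT_G_zero]
  | succ m ih =>
    rw [softLT_G_succ, Finset.sum_Icc_succ_top (Nat.le_add_left 1 m), mul_add]
    refine add_le_add (ih fun k h1 h2 => h k h1 (h2.trans (Nat.le_succ m))) ?_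
    exact mul_le_mul_of_nonneg_right (h (m+1) (Nat.le_add_left 1 m) le_rfl) (hg0 _ _)

-- On an event where fewer than k+1 points lie strictly below the curve at any time
-- strictly before ξ_{k+1}, and ξ_{k+1} > 0, at most k points are strictly below G_{k+1}.
lemma softLT_lt_bound_of_pos (k : ℕ) (hxi : 0 < (softLT g z v (k+1)).1) :
    {i : ℕ | v i < (softLT g z v (k+1)).2 (z i)}.encard ≤ (k : ℕ∞) := by
  classical
  by_contra hcon
  push_neg at hcon
  have hk1 : ((k+1 : ℕ) : ℕ∞) ≤ {i : ℕ | v i < (softLT g z v (k+1)).2 (z i)}.encard := by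
    exact_mod_cast Order.add_one_le_of_lt hcon
  obtain ⟨F, hFsub, hFcard⟩ := Set.exists_subset_encard_eq hk1
  have hFfin : F.Finite := Set.finite_of_encard_eq_coe hFcard
  have hFne : F.Nonempty := by
    rw [← Set.encard_ne_zero, hFcard]
    exact_mod_cast Nat.succ_ne_zero k
  set ξ := (softLT g z v (k+1)).1 with hξdef
  set G := (softLT g z v k).2 with hGdef
  -- for each i ∈ F choose a time t i ∈ [0, ξ) with v i ≤ t i * g (k+1) (z i) + G (z i)
  have key : ∀ i ∈ F, ∃ t : ℝ, 0 ≤ t ∧ t < ξ ∧ v i ≤ t * g (k+1) (z i) + G (z i) := by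
    intro i hi
    have hlt : v i < G (z i) + ξ * g (k+1) (z i) := hFsub hi
    rcases eq_or_lt_of_le (hg0 (k+1) (z i)) with hgz | hgz
    · exact ⟨0, le_rfl, hxi, by nlinarith⟩
    · refine ⟨max 0 ((v i - G (z i)) / g (k+1) (z i)), le_max_left _ _, ?_, ?_⟩
      · apply max_lt hxi
        rw [div_lt_iff₀ hgz]
        nlinarith
      · have : (v i - G (z i)) / g (k+1) (z i) ≤ max 0 ((v i - G (z i)) / g (k+1) (z i)) :=
          le_max_right _ _
        rw [div_le_iff₀ hgz] at this
        nlinarith [le_max_left 0 ((v i - G (z i)) / g (k+1) (z i))]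
  choose t ht0 htlt htle using key
  set Fs := hFfin.toFinset with hFs
  have hFsne : Fs.Nonempty := by simpa [hFs] using hFne
  set t' := Fs.sup' hFsne (fun i => if h : i ∈ F then t i h else 0) with ht'
  have ht'lt : t' < ξ := by
    apply Finset.sup'_lt_iff hFsne |>.2
    intro i hi
    have hiF : i ∈ F := by simpa [hFs] using hi
    simp [hiF, htlt]
  have ht'0 : 0 ≤ t' := by
    obtain ⟨i, hi⟩ := hFsne
    have hiF : i ∈ F := by simpa [hFs] using hi
    calc (0:ℝ) ≤ t i hiF := ht0 i hiF
    _ ≤ t' := by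
        refine le_trans ?_ (Finset.le_sup' _ hi)
        simp [hiF]
  have hmem : t' ∈ {s : ℝ | 0 ≤ s ∧
      ((k + 1 : ℕ) : ℕ∞) ≤ {i : ℕ | v i ≤ s * g (k + 1) (z i) + G (z i)}.encard} := by
    refine ⟨ht'0, ?_⟩
    rw [← hFcard]
    apply Set.encard_le_encard
    intro i hi
    have hti : t i hi ≤ t' := by
      refine le_trans ?_ (Finset.le_sup' _ (by simpa [hFs] using hi))
      simp [hi]
    have := htle i hi
    have hgz := hg0 (k+1) (z i)
    simp only [Set.mem_setOf_eq]
    nlinarith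
  have : ξ ≤ t' := by
    rw [hξdef, softLT_xi_succ]
    exact csInf_le ⟨0, fun x hx => hx.1⟩ hmem
  linarith

lemma softLT_lt_bound (h0 : ∀ i, 0 ≤ v i) (k : ℕ) :
    {i : ℕ | v i < (softLT g z v (k+1)).2 (z i)}.encard ≤ (k : ℕ∞) := by
  induction k with
  | zero =>
    rcases eq_or_lt_of_le (softLT_xi_nonneg g z v 1) with hxi | hxi
    · have : {i : ℕ | v i < (softLT g z v 1).2 (z i)} = ∅ := by
        ext i
        simp only [Set.mem_setOf_eq, Set.mem_empty_iff_false, iff_false, not_lt]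
        rw [softLT_G_succ, softLT_G_zero, ← hxi]
        simpa using h0 i
      rw [this, Set.encard_empty]
      exact zero_le
    · exact softLT_lt_bound_of_pos g z v hg0 0 hxi
  | succ k ih =>
    rcases eq_or_lt_of_le (softLT_xi_nonneg g z v (k+2)) with hxi | hxi
    · have heq : {i : ℕ | v i < (softLT g z v (k+2)).2 (z i)}
          = {i : ℕ | v i < (softLT g z v (k+1)).2 (z i)} := by
        ext i
        simp only [Set.mem_setOf_eq]
        rw [softLT_G_succ g z v (k+1), ← hxi, zero_mul, add_zero]
      rw [heq]
      exact le_trans ih (by exact_mod_cast Nat.le_succ k)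
    · exact softLT_lt_bound_of_pos g z v hg0 (k+1) hxi

-- monotonicity of the sublevel sets in t
lemma softLT_U_mono {j : ℕ} {t t' : ℝ} (htt' : t ≤ t') :
    {i : ℕ | v i ≤ t * g j (z i) + (softLT g z v (j-1)).2 (z i)}
      ⊆ {i : ℕ | v i ≤ t' * g j (z i) + (softLT g z v (j-1)).2 (z i)} := by
  intro i hi
  simp only [Set.mem_setOf_eq] at hi ⊢
  have := hg0 j (z i)
  nlinarith

/-- At time `ξ_j`, at least `j` points lie (weakly) below the curve `G_j`. -/
lemma softLT_ge_count (m : ℕ)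
    (hfin : ∀ t : ℝ, 0 ≤ t →
      {i : ℕ | v i ≤ t * g (m+1) (z i) + (softLT g z v m).2 (z i)}.Finite)
    (hex : ∃ t : ℝ, 0 ≤ t ∧ ((m+1 : ℕ) : ℕ∞) ≤ {i : ℕ | v i ≤ t * g (m+1) (z i)}.encard) :
    ((m+1 : ℕ) : ℕ∞) ≤ {i : ℕ | v i ≤ (softLT g z v (m+1)).2 (z i)}.encard := by
  classical
  set G := (softLT g z v m).2 with hGdef
  set U : ℝ → Set ℕ := fun t => {i : ℕ | v i ≤ t * g (m+1) (z i) + G (z i)} with hUdef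
  set S : Set ℝ := {t : ℝ | 0 ≤ t ∧ ((m + 1 : ℕ) : ℕ∞) ≤ (U t).encard} with hSdef
  have hUm : ∀ {t t' : ℝ}, t ≤ t' → U t ⊆ U t' := by
    intro t t' h i hi
    simp only [hUdef, Set.mem_setOf_eq] at hi ⊢
    have := hg0 (m+1) (z i)
    nlinarith
  have hxieq : (softLT g z v (m+1)).1 = sInf S := by rw [softLT_xi_succ]
  set ξ := (softLT g z v (m+1)).1 with hξdef
  have hTU : {i : ℕ | v i ≤ (softLT g z v (m+1)).2 (z i)} = U ξ := by
    ext i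
    simp only [hUdef, Set.mem_setOf_eq, softLT_G_succ]
    constructor <;> intro h <;> nlinarith
  rw [hTU]
  have hSne : S.Nonempty := by
    obtain ⟨t, ht0, htc⟩ := hex
    refine ⟨t, ht0, le_trans htc (Set.encard_le_encard ?_)⟩
    intro i hi
    simp only [Set.mem_setOf_eq] at hi
    simp only [hUdef, Set.mem_setOf_eq]
    have := softLT_G_nonneg g z v hg0 m (z i)
    rw [hGdef] at *
    nlinarith
  have hSbdd : BddBelow S := ⟨0, fun x hx => hx.1⟩
  by_cases hmem : ξ ∈ S
  · exact hmem.2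
  -- ξ ∉ S : approximate from the right
  obtain ⟨t₁, ht₁S⟩ := id hSne
  have ht₁0 : 0 ≤ t₁ := ht₁S.1
  have hWfin : (U t₁).Finite := hfin t₁ ht₁0
  set D : Set ℕ := U t₁ \ U ξ with hDdef
  have hDfin : D.Finite := hWfin.subset Set.diff_subset
  have hgpos : ∀ i ∈ D, 0 < g (m+1) (z i) := by
    intro i hi
    rcases eq_or_lt_of_le (hg0 (m+1) (z i)) with hgz | hgz
    · exfalso
      obtain ⟨hiW, hiV⟩ := hi
      simp only [hUdef, Set.mem_setOf_eq] at hiW hiV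
      push_neg at hiV
      rw [← hgz] at hiW hiV
      simp only [mul_zero, zero_add] at hiW hiV
      linarith
    · exact hgz
  by_cases hDne : D.Nonempty
  · set Ds := hDfin.toFinset with hDs
    have hDsne : Ds.Nonempty := by simpa [hDs] using hDne
    set td : ℕ → ℝ := fun i => (v i - G (z i)) / g (m+1) (z i) with htd
    have htdgt : ∀ i ∈ D, ξ < td i := by
      intro i hi
      have hg := hgpos i hi
      have hiV := hi.2
      simp only [hUdef, Set.mem_setOf_eq] at hiV
      push_neg at hiV
      rw [htd, lt_div_iff₀ hg]
      nlinarith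
    have htdle : ∀ i ∈ D, td i ≤ t₁ := by
      intro i hi
      have hg := hgpos i hi
      have hiW := hi.1
      simp only [hUdef, Set.mem_setOf_eq] at hiW
      rw [htd, div_le_iff₀ hg]
      nlinarith
    set t' := Ds.inf' hDsne td with ht'
    have ht'gt : ξ < t' := by
      apply (Finset.lt_inf'_iff hDsne).2
      intro i hi
      exact htdgt i (by simpa [hDs] using hi)
    obtain ⟨s, hsS, hslt⟩ := (csInf_lt_iff hSbdd hSne).1 (by rw [← hxieq]; exact ht'gt)
    -- U s ⊆ U ξ
    have ht'le : t' ≤ t₁ := by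
      obtain ⟨i₀, hi₀⟩ := hDsne
      exact le_trans (Finset.inf'_le _ hi₀) (htdle i₀ (by simpa [hDs] using hi₀))
    have hUsub : U s ⊆ U ξ := by
      intro i hi
      by_contra hiV
      have hiD : i ∈ D := ⟨hUm (le_trans hslt.le ht'le) hi, hiV⟩
      have h1 : t' ≤ td i := Finset.inf'_le _ (by simpa [hDs] using hiD)
      have hg := hgpos i hiD
      simp only [hUdef, Set.mem_setOf_eq] at hi
      have h2 : td i ≤ s := by
        rw [htd, div_le_iff₀ hg]
        nlinarith
      linarith
    exact le_trans hsS.2 (Set.encard_le_encard hUsub)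
  · -- D empty : U t₁ ⊆ U ξ
    have : U t₁ ⊆ U ξ := by
      intro i hi
      by_contra hiV
      exact hDne ⟨i, hi, hiV⟩
    exact le_trans ht₁S.2 (Set.encard_le_encard this)

lemma softLT_ge_count' {j : ℕ} (hj : 1 ≤ j)
    (hfin : ∀ t : ℝ, 0 ≤ t →
      {i : ℕ | v i ≤ t * g j (z i) + (softLT g z v (j-1)).2 (z i)}.Finite)
    (hex : ∃ t : ℝ, 0 ≤ t ∧ ((j : ℕ) : ℕ∞) ≤ {i : ℕ | v i ≤ t * g j (z i)}.encard) :
    ((j : ℕ) : ℕ∞) ≤ {i : ℕ | v i ≤ (softLT g z v j).2 (z i)}.encard := by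
  obtain ⟨m, rfl⟩ := Nat.exists_eq_add_of_le hj
  rw [Nat.add_comm] at *
  exact softLT_ge_count g z v hg0 m (by simpa using hfin) hex

lemma softLT_T_le (h0 : ∀ i, 0 ≤ v i) {j : ℕ} (hj : 1 ≤ j) {i₀ : ℕ}
    (huniq : ∀ i, (softLT g z v j).2 (z i) = v i → i = i₀) :
    {i : ℕ | v i ≤ (softLT g z v j).2 (z i)}.encard ≤ (j : ℕ∞) := by
  obtain ⟨m, rfl⟩ := Nat.exists_eq_add_of_le hj
  rw [Nat.add_comm] at *
  have hsub : {i : ℕ | v i ≤ (softLT g z v (m+1)).2 (z i)}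
      ⊆ {i : ℕ | v i < (softLT g z v (m+1)).2 (z i)} ∪ {i₀} := by
    intro i hi
    rcases lt_or_eq_of_le (show v i ≤ (softLT g z v (m+1)).2 (z i) from hi) with h | h
    · exact Or.inl h
    · exact Or.inr (huniq i h.symm)
  calc {i : ℕ | v i ≤ (softLT g z v (m+1)).2 (z i)}.encard
      ≤ _ := Set.encard_le_encard hsub
    _ ≤ {i : ℕ | v i < (softLT g z v (m+1)).2 (z i)}.encard + ({i₀} : Set ℕ).encard :=
        Set.encard_union_le _ _
    _ ≤ (m : ℕ∞) + 1 := by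
        rw [Set.encard_singleton]
        exact add_le_add_left (softLT_lt_bound g z v hg0 h0 m) 1
    _ = ((m + 1 : ℕ) : ℕ∞) := by push_cast; ring

lemma softLT_inj (h0 : ∀ i, 0 ≤ v i)
    (J : ℕ) (iSel : ℕ → ℕ)
    (hfin : ∀ j, 1 ≤ j → j ≤ J → ∀ t : ℝ, 0 ≤ t →
      {i : ℕ | v i ≤ t * g j (z i) + (softLT g z v (j-1)).2 (z i)}.Finite)
    (hex : ∀ j, 1 ≤ j → j ≤ J →
      ∃ t : ℝ, 0 ≤ t ∧ (j : ℕ∞) ≤ {i : ℕ | v i ≤ t * g j (z i)}.encard)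
    (hsel : ∀ j, 1 ≤ j → j ≤ J → (softLT g z v j).2 (z (iSel j)) = v (iSel j) ∧
      ∀ i, (softLT g z v j).2 (z i) = v i → i = iSel j)
    {j j' : ℕ} (hj : 1 ≤ j) (hjj' : j < j') (hj'J : j' ≤ J) :
    iSel j ≠ iSel j' := by
  have hj'1 : 1 ≤ j' := le_trans hj hjj'.le
  have hm1 : 1 ≤ j' - 1 := by omega
  have hjJ : j ≤ J := le_trans hjj'.le hj'J
  have hmJ : j' - 1 ≤ J := by omega
  -- counts
  have hA' : (j' : ℕ∞) ≤ {i : ℕ | v i ≤ (softLT g z v j').2 (z i)}.encard :=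
    softLT_ge_count' g z v hg0 hj'1 (hfin j' hj'1 hj'J) (hex j' hj'1 hj'J)
  have hAm : ((j' - 1 : ℕ) : ℕ∞) ≤ {i : ℕ | v i ≤ (softLT g z v (j'-1)).2 (z i)}.encard :=
    softLT_ge_count' g z v hg0 hm1 (hfin _ hm1 hmJ) (hex _ hm1 hmJ)
  have hTm : {i : ℕ | v i ≤ (softLT g z v (j'-1)).2 (z i)}.encard ≤ ((j' - 1 : ℕ) : ℕ∞) :=
    softLT_T_le g z v hg0 h0 hm1 (hsel _ hm1 hmJ).2
  -- a point strictly between the two curves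
  have hstar : ∃ i, v i ≤ (softLT g z v j').2 (z i) ∧ ¬ v i ≤ (softLT g z v (j'-1)).2 (z i) := by
    by_contra hcon
    push_neg at hcon
    have hsub : {i : ℕ | v i ≤ (softLT g z v j').2 (z i)}
        ⊆ {i : ℕ | v i ≤ (softLT g z v (j'-1)).2 (z i)} := fun i hi => hcon i hi
    have := le_trans hA' (le_trans (Set.encard_le_encard hsub) hTm)
    rw [Nat.cast_le] at this
    omega
  obtain ⟨istar, histar1, histar2⟩ := hstar
  push_neg at histar2
  -- istar achieves equality at level j'
  have hEq : v istar = (softLT g z v j').2 (z istar) := by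
    rcases lt_or_eq_of_le histar1 with hlt | heq
    · exfalso
      -- strict inequality is impossible
      obtain ⟨m, rfl⟩ : ∃ m, j' = m + 1 := ⟨j' - 1, by omega⟩
      simp only [Nat.add_sub_cancel] at histar2 hAm hTm
      rw [softLT_G_succ] at hlt
      set ξ := (softLT g z v (m+1)).1 with hξdef
      set G := (softLT g z v m).2 with hGdef
      have hξ0 : 0 ≤ ξ := softLT_xi_nonneg g z v (m+1)
      have hgpos : 0 < g (m+1) (z istar) := by
        rcases eq_or_lt_of_le (hg0 (m+1) (z istar)) with hgz | hgz
        · exfalso; rw [← hgz] at hlt; simp only [mul_zero, add_zero] at hlt; linarith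
        · exact hgz
      set t := (v istar - G (z istar)) / g (m+1) (z istar) with htdef
      have ht0 : 0 < t := div_pos (by linarith) hgpos
      have htlt : t < ξ := by rw [htdef, div_lt_iff₀ hgpos]; nlinarith
      have hteq : v istar = t * g (m+1) (z istar) + G (z istar) := by
        rw [htdef, div_mul_cancel₀ _ (ne_of_gt hgpos)]; ring
      have hmemS : t ∈ {s : ℝ | 0 ≤ s ∧
          ((m + 1 : ℕ) : ℕ∞) ≤ {i : ℕ | v i ≤ s * g (m + 1) (z i) + G (z i)}.encard} := by
        refine ⟨ht0.le, ?_⟩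
        have hsub : insert istar {i : ℕ | v i ≤ G (z i)}
            ⊆ {i : ℕ | v i ≤ t * g (m + 1) (z i) + G (z i)} := by
          rintro i (rfl | hi)
          · exact le_of_eq hteq
          · simp only [Set.mem_setOf_eq] at hi ⊢
            have := hg0 (m+1) (z i)
            nlinarith
        have hni : istar ∉ {i : ℕ | v i ≤ G (z i)} := histar2.not_ge
        calc ((m + 1 : ℕ) : ℕ∞) = (m : ℕ∞) + 1 := by push_cast; ring
          _ ≤ {i : ℕ | v i ≤ G (z i)}.encard + 1 := add_le_add_left hAm 1
          _ = (insert istar {i : ℕ | v i ≤ G (z i)}).encard :=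
              (Set.encard_insert_of_notMem hni).symm
          _ ≤ _ := Set.encard_le_encard hsub
      have : ξ ≤ t := by
        rw [hξdef, softLT_xi_succ]
        exact csInf_le ⟨0, fun x hx => hx.1⟩ hmemS
      linarith
    · exact heq
  have histar : istar = iSel j' := (hsel j' hj'1 hj'J).2 istar hEq.symm
  -- iSel j is below the (j'-1)-curve
  intro hcontra
  apply histar2.not_ge
  rw [histar, ← hcontra]
  calc v (iSel j) = (softLT g z v j).2 (z (iSel j)) := ((hsel j hj hjJ).1).symm
    _ ≤ (softLT g z v (j'-1)).2 (z (iSel j)) := softLT_G_mono g z v hg0 _ (by omega)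

lemma softLT_main_det {iSel : ℕ → ℕ} (h0 : ∀ i, 0 ≤ v i)
    {J : ℕ}
    (hfin : ∀ j, 1 ≤ j → j ≤ J → ∀ t : ℝ, 0 ≤ t →
      {i : ℕ | v i ≤ t * g j (z i) + (softLT g z v (j-1)).2 (z i)}.Finite)
    (hex : ∀ j, 1 ≤ j → j ≤ J →
      ∃ t : ℝ, 0 ≤ t ∧ (j : ℕ∞) ≤ {i : ℕ | v i ≤ t * g j (z i)}.encard)
    (hsel : ∀ j, 1 ≤ j → j ≤ J → (softLT g z v j).2 (z (iSel j)) = v (iSel j) ∧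
      ∀ i, (softLT g z v j).2 (z i) = v i → i = iSel j)
    {ζ : ℝ} (hζne : ∀ i, v i ≠ ζ) (hG : ∀ x, (softLT g z v J).2 x ≤ ζ) (y : E) :
    (Nat.card {a : Fin J // z (iSel (a.1 + 1)) = y} : ℕ∞)
      ≤ {i : ℕ | v i < ζ ∧ z i = y}.encard := by
  classical
  set s : Set (Fin J) := {a : Fin J | z (iSel (a.1 + 1)) = y} with hs
  set f : Fin J → ℕ := fun a => iSel (a.1 + 1) with hf
  have hcard : (Nat.card {a : Fin J // z (iSel (a.1 + 1)) = y} : ℕ∞) = s.encard := by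
    rw [show Nat.card {a : Fin J // z (iSel (a.1 + 1)) = y} = Nat.card s from rfl,
      Nat.card_coe_set_eq, (s.toFinite).cast_ncard_eq]
  have hinj : Set.InjOn f s := by
    intro a _ b _ hab
    by_contra hne
    have hne' : a.1 ≠ b.1 := fun h => hne (Fin.ext h)
    rcases lt_or_gt_of_ne hne' with h | h
    · exact softLT_inj g z v hg0 h0 J iSel hfin hex hsel (Nat.le_add_left 1 a.1)
        (by omega) (by omega : b.1 + 1 ≤ J) hab
    · exact softLT_inj g z v hg0 h0 J iSel hfin hex hsel (Nat.le_add_left 1 b.1)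
        (by omega) (by omega : a.1 + 1 ≤ J) hab.symm
  have himg : f '' s ⊆ {i : ℕ | v i < ζ ∧ z i = y} := by
    rintro _ ⟨a, ha, rfl⟩
    have haJ : a.1 + 1 ≤ J := a.isLt
    have h1 : (softLT g z v (a.1+1)).2 (z (f a)) = v (f a) :=
      (hsel (a.1+1) (Nat.le_add_left 1 a.1) haJ).1
    have h2 : v (f a) ≤ ζ := by
      rw [← h1]
      exact le_trans (softLT_G_mono g z v hg0 _ haJ) (hG _)
    exact ⟨lt_of_le_of_ne h2 (hζne _), ha⟩
  rw [hcard, ← hinj.encard_image]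
  exact Set.encard_le_encard himg

end basic

section prob
variable {E : Type*} [MeasurableSpace E] {Ω : Type*} [MeasurableSpace Ω]
variable {Q : Measure Ω} {z : ℕ → Ω → E} {v : ℕ → Ω → ℝ}

lemma enat_lt_coe_iff {c : ℕ∞} {j : ℕ} (h : c < (j : ℕ∞)) : ∃ n : ℕ, n < j ∧ c = n := by
  cases c using ENat.recTopCoe with
  | top => exact absurd h (not_top_lt)
  | coe n => exact ⟨n, by exact_mod_cast h, rfl⟩

lemma count_ge_meas (hz : ∀ i, Measurable (z i)) (hv : ∀ i, Measurable (v i))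
    {A : Set (E × ℝ)} (hA : MeasurableSet A) (n : ℕ) :
    MeasurableSet {ω | (n : ℕ∞) ≤ {i : ℕ | (z i ω, v i ω) ∈ A}.encard} := by
  have heq : {ω | (n : ℕ∞) ≤ {i : ℕ | (z i ω, v i ω) ∈ A}.encard}
      = ⋃ (F : Finset ℕ) (_ : F.card = n), ⋂ i ∈ F, {ω | (z i ω, v i ω) ∈ A} := by
    ext ω
    simp only [Set.mem_setOf_eq, Set.mem_iUnion, Set.mem_iInter]
    constructor
    · intro h
      obtain ⟨t, hts, htc⟩ := Set.exists_subset_encard_eq h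
      have htf : t.Finite := Set.finite_of_encard_eq_coe htc
      refine ⟨htf.toFinset, ?_, ?_⟩
      · rw [← Nat.cast_inj (R := ℕ∞), ← htf.encard_eq_coe_toFinset_card, htc]
      · intro i hi
        exact hts (htf.mem_toFinset.1 hi)
    · rintro ⟨F, hFc, hFs⟩
      calc (n : ℕ∞) = (F : Set ℕ).encard := by
            rw [Set.encard_coe_eq_coe_finsetCard, hFc]
        _ ≤ _ := Set.encard_le_encard fun i hi => hFs i hi
  rw [heq]
  refine MeasurableSet.iUnion fun F => MeasurableSet.iUnion fun _ =>
    MeasurableSet.biInter F.countable_toSet fun i _ => ?_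
  exact ((hz i).prodMk (hv i)) hA

lemma count_eq_meas (hz : ∀ i, Measurable (z i)) (hv : ∀ i, Measurable (v i))
    {A : Set (E × ℝ)} (hA : MeasurableSet A) (n : ℕ) :
    MeasurableSet {ω | {i : ℕ | (z i ω, v i ω) ∈ A}.encard = (n : ℕ∞)} := by
  have heq : {ω | {i : ℕ | (z i ω, v i ω) ∈ A}.encard = (n : ℕ∞)}
      = {ω | (n : ℕ∞) ≤ {i : ℕ | (z i ω, v i ω) ∈ A}.encard}
        \ {ω | ((n + 1 : ℕ) : ℕ∞) ≤ {i : ℕ | (z i ω, v i ω) ∈ A}.encard} := by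
    ext ω
    simp only [Set.mem_setOf_eq, Set.mem_diff]
    constructor
    · intro h
      refine ⟨le_of_eq h.symm, ?_⟩
      rw [h]
      exact_mod_cast Nat.not_succ_le_self n
    · rintro ⟨h1, h2⟩
      push_neg at h2
      obtain ⟨m, hm, hc⟩ := enat_lt_coe_iff h2
      rw [hc] at h1 ⊢
      rw [Nat.cast_le] at h1
      have : m = n := by omega
      rw [this]
  rw [heq]
  exact (count_ge_meas hz hv hA n).diff (count_ge_meas hz hv hA (n+1))

lemma count_disjoint {A : Set (E × ℝ)} :
    Pairwise (Function.onFun Disjoint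
      fun n : ℕ => {ω | {i : ℕ | (z i ω, v i ω) ∈ A}.encard = (n : ℕ∞)}) := by
  intro m n hmn
  rw [Function.onFun, Set.disjoint_left]
  intro ω h1 h2
  simp only [Set.mem_setOf_eq] at h1 h2
  rw [h1] at h2
  exact hmn (by exact_mod_cast h2)

lemma ae_count_finite [IsProbabilityMeasure Q] {μ : Measure E}
    (hz : ∀ i, Measurable (z i)) (hv : ∀ i, Measurable (v i))
    (hcount : ∀ A : Set (E × ℝ), MeasurableSet A →
      (μ.prod (volume.restrict (Set.Ici (0 : ℝ)))) A < ⊤ →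
      ∀ n : ℕ,
        Q {ω | {i : ℕ | (z i ω, v i ω) ∈ A}.encard = (n : ℕ∞)}
          = ENNReal.ofReal
              (poissonPMFReal ((μ.prod (volume.restrict (Set.Ici (0 : ℝ)))) A).toNNReal n))
    {A : Set (E × ℝ)} (hA : MeasurableSet A)
    (hAfin : (μ.prod (volume.restrict (Set.Ici (0 : ℝ)))) A < ⊤) :
    ∀ᵐ ω ∂Q, {i : ℕ | (z i ω, v i ω) ∈ A}.Finite := by
  set r := ((μ.prod (volume.restrict (Set.Ici (0 : ℝ)))) A).toNNReal with hr
  have hU : Q (⋃ n : ℕ, {ω | {i : ℕ | (z i ω, v i ω) ∈ A}.encard = (n : ℕ∞)}) = 1 := by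
    rw [measure_iUnion count_disjoint (fun n => count_eq_meas hz hv hA n)]
    have : ∀ n : ℕ, Q {ω | {i : ℕ | (z i ω, v i ω) ∈ A}.encard = (n : ℕ∞)}
        = ENNReal.ofReal (poissonPMFReal r n) := fun n => hcount A hA hAfin n
    rw [tsum_congr this, ← ENNReal.ofReal_tsum_of_nonneg (fun n => poissonPMFReal_nonneg)
      (poissonPMFRealSum r).summable, (show HasSum (fun n => poissonPMFReal r n) 1 from poissonPMFRealSum r).tsum_eq, ENNReal.ofReal_one]
  have hsub : (⋃ n : ℕ, {ω | {i : ℕ | (z i ω, v i ω) ∈ A}.encard = (n : ℕ∞)})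
      ⊆ {ω | {i : ℕ | (z i ω, v i ω) ∈ A}.Finite} := by
    rintro ω hω
    simp only [Set.mem_iUnion, Set.mem_setOf_eq] at hω ⊢
    obtain ⟨n, hn⟩ := hω
    exact Set.finite_of_encard_eq_coe hn
  have : Q {ω | {i : ℕ | (z i ω, v i ω) ∈ A}.Finite} = 1 := by
    refine le_antisymm prob_le_one ?_
    rw [← hU]
    exact measure_mono hsub
  rw [Filter.eventually_iff, mem_ae_iff]
  have hms : MeasurableSet {ω | {i : ℕ | (z i ω, v i ω) ∈ A}.Finite} := by
    have : {ω | {i : ℕ | (z i ω, v i ω) ∈ A}.Finite}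
        = ⋃ n : ℕ, {ω | {i : ℕ | (z i ω, v i ω) ∈ A}.encard = (n : ℕ∞)} := by
      refine subset_antisymm ?_ hsub
      intro ω hω
      simp only [Set.mem_iUnion, Set.mem_setOf_eq] at hω ⊢
      exact ⟨(hω : Set.Finite _).toFinset.card, (hω : Set.Finite _).encard_eq_coe_toFinset_card⟩
    rw [this]
    exact MeasurableSet.iUnion fun n => count_eq_meas hz hv hA n
  exact (prob_compl_eq_zero_iff hms).2 this

lemma prod_curve_measure (μ : Measure E) {c : E → ℝ} (hc : Measurable c) :
    (μ.prod (volume.restrict (Set.Ici (0 : ℝ)))) {p : E × ℝ | 0 ≤ p.2 ∧ p.2 ≤ c p.1}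
      = ∫⁻ x, ENNReal.ofReal (c x) ∂μ := by
  have hAms : MeasurableSet {p : E × ℝ | 0 ≤ p.2 ∧ p.2 ≤ c p.1} := by
    refine MeasurableSet.inter ?_ ?_
    · exact measurableSet_le measurable_const measurable_snd
    · exact measurableSet_le measurable_snd (hc.comp measurable_fst)
  rw [Measure.prod_apply hAms]
  have : ∀ x : E, (volume.restrict (Set.Ici (0:ℝ))) (Prod.mk x ⁻¹' {p : E × ℝ | 0 ≤ p.2 ∧ p.2 ≤ c p.1})
      = ENNReal.ofReal (c x) := by
    intro x
    have hpre : Prod.mk x ⁻¹' {p : E × ℝ | 0 ≤ p.2 ∧ p.2 ≤ c p.1} = Set.Icc 0 (c x) := by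
      ext s; simp [Set.mem_Icc, and_comm]
    rw [hpre, Measure.restrict_apply measurableSet_Icc,
      Set.inter_eq_left.2 (fun s hs => hs.1), Real.volume_Icc, sub_zero]
  rw [lintegral_congr this]

lemma ae_count_exists [IsProbabilityMeasure Q] {μ : Measure E}
    (hz : ∀ i, Measurable (z i)) (hv : ∀ i, Measurable (v i))
    (hcount : ∀ A : Set (E × ℝ), MeasurableSet A →
      (μ.prod (volume.restrict (Set.Ici (0 : ℝ)))) A < ⊤ →
      ∀ n : ℕ,
        Q {ω | {i : ℕ | (z i ω, v i ω) ∈ A}.encard = (n : ℕ∞)}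
          = ENNReal.ofReal
              (poissonPMFReal ((μ.prod (volume.restrict (Set.Ici (0 : ℝ)))) A).toNNReal n))
    {gj : E → ℝ} (hgj : Measurable gj)
    (hgj1 : ∫⁻ x, ENNReal.ofReal (gj x) ∂μ = 1) (j : ℕ) :
    ∀ᵐ ω ∂Q, ∃ t : ℝ, 0 ≤ t ∧ (j : ℕ∞) ≤ {i : ℕ | v i ω ≤ t * gj (z i ω)}.encard := by
  classical
  set A : ℕ → Set (E × ℝ) := fun T => {p : E × ℝ | 0 ≤ p.2 ∧ p.2 ≤ (T : ℝ) * gj p.1} with hA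
  have hAm : ∀ T, MeasurableSet (A T) := fun T =>
    MeasurableSet.inter (measurableSet_le measurable_const measurable_snd)
      (measurableSet_le measurable_snd ((measurable_const.mul hgj).comp measurable_fst))
  have hAval : ∀ T : ℕ, (μ.prod (volume.restrict (Set.Ici (0 : ℝ)))) (A T)
      = ENNReal.ofReal (T : ℝ) := by
    intro T
    rw [hA]
    rw [prod_curve_measure μ (c := fun x => (T : ℝ) * gj x) (measurable_const.mul hgj)]
    have h1 : ∀ x, ENNReal.ofReal ((T : ℝ) * gj x)
        = ENNReal.ofReal (T : ℝ) * ENNReal.ofReal (gj x) := fun x =>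
      ENNReal.ofReal_mul (Nat.cast_nonneg T)
    rw [lintegral_congr h1, lintegral_const_mul _ hgj.ennreal_ofReal, hgj1, mul_one]
  set D : ℕ → Set Ω := fun T => {ω | (j : ℕ∞) ≤ {i : ℕ | (z i ω, v i ω) ∈ A T}.encard} with hD
  have hDm : ∀ T, MeasurableSet (D T) := fun T => count_ge_meas hz hv (hAm T) j
  have hcompl : ∀ T : ℕ, Q ((D T)ᶜ)
      = ENNReal.ofReal (∑ n ∈ Finset.range j,
          poissonPMFReal (ENNReal.ofReal (T : ℝ)).toNNReal n) := by
    intro T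
    have hDc : (D T)ᶜ = ⋃ n ∈ Finset.range j,
        {ω | {i : ℕ | (z i ω, v i ω) ∈ A T}.encard = (n : ℕ∞)} := by
      ext ω
      simp only [Set.mem_compl_iff, hD, Set.mem_setOf_eq, Set.mem_iUnion, Finset.mem_range]
      constructor
      · intro h
        push_neg at h
        obtain ⟨n, hn, hc⟩ := enat_lt_coe_iff h
        exact ⟨n, hn, hc⟩
      · rintro ⟨n, hn, hc⟩
        rw [hc]
        intro hle
        rw [Nat.cast_le] at hle
        omega
    rw [hDc, measure_biUnion_finset (fun m _ n _ hmn => count_disjoint hmn)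
      (fun n _ => count_eq_meas hz hv (hAm T) n)]
    rw [Finset.sum_congr rfl
      (fun n _ => hcount (A T) (hAm T) (by rw [hAval T]; exact ENNReal.ofReal_lt_top) n)]
    simp only [hAval]
    rw [ENNReal.ofReal_sum_of_nonneg (fun n _ => poissonPMFReal_nonneg)]
  have htends : Filter.Tendsto (fun T : ℕ => ∑ n ∈ Finset.range j,
      poissonPMFReal (ENNReal.ofReal (T : ℝ)).toNNReal n) Filter.atTop (nhds 0) := by
    have hco : ∀ T : ℕ, (((ENNReal.ofReal (T : ℝ)).toNNReal : ℝ)) = (T : ℝ) := fun T => by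
      rw [show ((ENNReal.ofReal (T : ℝ)).toNNReal : ℝ) = (ENNReal.ofReal (T : ℝ)).toReal from rfl,
        ENNReal.toReal_ofReal (Nat.cast_nonneg T)]
    have heq : ∀ T : ℕ, (∑ n ∈ Finset.range j,
        poissonPMFReal (ENNReal.ofReal (T : ℝ)).toNNReal n)
        = ∑ n ∈ Finset.range j, ((T : ℝ) ^ n * Real.exp (-(T : ℝ))) / n.factorial := by
      intro T
      refine Finset.sum_congr rfl fun n _ => ?_
      rw [poissonPMFReal, hco]
      ring
    rw [show (0 : ℝ) = ∑ n ∈ Finset.range j, (0 : ℝ) by simp]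
    refine Filter.Tendsto.congr (fun T => (heq T).symm) (tendsto_finset_sum _ fun n _ => ?_)
    have h1 := (Real.tendsto_pow_mul_exp_neg_atTop_nhds_zero n).comp
      (tendsto_natCast_atTop_atTop (R := ℝ))
    simpa using h1.div_const (n.factorial : ℝ)
  have hQ : Q ((⋃ T, D T)ᶜ) = 0 := by
    refine le_antisymm ?_ zero_le
    have h2 : Filter.Tendsto (fun T : ℕ => Q ((D T)ᶜ)) Filter.atTop (nhds 0) := by
      rw [show (0 : ℝ≥0∞) = ENNReal.ofReal 0 by simp]
      exact Filter.Tendsto.congr (fun T => (hcompl T).symm) (ENNReal.tendsto_ofReal htends)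
    refine ge_of_tendsto h2 (Filter.Eventually.of_forall fun T => ?_)
    exact measure_mono (Set.compl_subset_compl.2 (Set.subset_iUnion D T))
  have hae : ∀ᵐ ω ∂Q, ω ∈ ⋃ T, D T := by
    rw [Filter.eventually_iff, mem_ae_iff]
    exact hQ
  filter_upwards [hae] with ω hω
  simp only [Set.mem_iUnion] at hω
  obtain ⟨T, hT⟩ := hω
  refine ⟨(T : ℝ), Nat.cast_nonneg T, le_trans hT (Set.encard_le_encard ?_)⟩
  intro i hi
  exact hi.2

lemma ae_ne_zeta [IsProbabilityMeasure Q] {μ : Measure E}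
    (hz : ∀ i, Measurable (z i)) (hv : ∀ i, Measurable (v i))
    (hcount : ∀ A : Set (E × ℝ), MeasurableSet A →
      (μ.prod (volume.restrict (Set.Ici (0 : ℝ)))) A < ⊤ →
      ∀ n : ℕ,
        Q {ω | {i : ℕ | (z i ω, v i ω) ∈ A}.encard = (n : ℕ∞)}
          = ENNReal.ofReal
              (poissonPMFReal ((μ.prod (volume.restrict (Set.Ici (0 : ℝ)))) A).toNNReal n))
    (ζ : ℝ) : ∀ᵐ ω ∂Q, ∀ i, v i ω ≠ ζ := by
  set A : Set (E × ℝ) := Set.univ ×ˢ ({ζ} : Set ℝ) with hA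
  have hAm : MeasurableSet A := MeasurableSet.univ.prod (measurableSet_singleton ζ)
  have hA0 : (μ.prod (volume.restrict (Set.Ici (0 : ℝ)))) A = 0 := by
    rw [hA, Measure.prod_prod]
    have h1 : (volume.restrict (Set.Ici (0 : ℝ))) {ζ} = 0 := by
      rw [Measure.restrict_apply (measurableSet_singleton ζ)]
      exact measure_mono_null Set.inter_subset_left Real.volume_singleton
    rw [h1, mul_zero]
  have hc := hcount A hAm (by rw [hA0]; exact ENNReal.zero_lt_top) 0
  rw [hA0] at hc
  simp only [ENNReal.toNNReal_zero] at hc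
  have hp1 : poissonPMFReal 0 0 = 1 := by
    simp [poissonPMFReal]
  rw [hp1, ENNReal.ofReal_one] at hc
  have hset : {ω | {i : ℕ | (z i ω, v i ω) ∈ A}.encard = ((0 : ℕ) : ℕ∞)}
      = {ω | ∀ i, v i ω ≠ ζ} := by
    ext ω
    simp only [Set.mem_setOf_eq, Nat.cast_zero, Set.encard_eq_zero, hA,
      Set.eq_empty_iff_forall_notMem, Set.mem_prod, Set.mem_univ, Set.mem_singleton_iff,
      true_and]
  rw [hset] at hc
  have hms : MeasurableSet {ω | ∀ i, v i ω ≠ ζ} := by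
    have : {ω | ∀ i, v i ω ≠ ζ} = ⋂ i, (v i) ⁻¹' ({ζ}ᶜ) := by
      ext ω; simp
    rw [this]
    exact MeasurableSet.iInter fun i => (hv i) (measurableSet_singleton ζ).compl
  rw [Filter.eventually_iff, mem_ae_iff]
  exact (prob_compl_eq_zero_iff hms).2 hc

end prob

/-- **Domination via soft local times** (Corollary `c:couplesystem`): in the soft local time
construction with probability densities `g_1, …, g_J` and selected indices `i_1, …, i_J`
(the a.s. unique indices with `G_j(z_{i_j}) = v_{i_j}`), for every `ζ > 0` the probability
that the point measure `∑_{j ≤ J} δ_{z_{i_j}}` is dominated by `∑_{i : v_i < ζ} δ_{z_i}`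
is at least the probability that the soft local time `G_J` stays below `ζ` everywhere. -/
theorem soft_local_time_domination
    {E : Type*} [MetricSpace E] [CompleteSpace E] [TopologicalSpace.SeparableSpace E]
    [LocallyCompactSpace E] [MeasurableSpace E] [BorelSpace E]
    (μ : Measure E) [IsFiniteMeasureOnCompacts μ]
    {Ω : Type*} [MeasurableSpace Ω] (Q : Measure Ω) [IsProbabilityMeasure Q]
    (z : ℕ → Ω → E) (v : ℕ → Ω → ℝ) (hppp : IsPPP Q z v μ)
    (g : ℕ → E → ℝ) (hg : ∀ j, Measurable (g j)) (hg0 : ∀ j x, 0 ≤ g j x)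
    (hg1 : ∀ j, 1 ≤ j → ∫⁻ x, ENNReal.ofReal (g j x) ∂μ = 1)
    (J : ℕ) (hJ : 1 ≤ J)
    (iSel : ℕ → Ω → ℕ)
    (hSel : ∀ j : ℕ, 1 ≤ j → j ≤ J → ∀ᵐ ω ∂Q,
      (softLT g (fun i => z i ω) (fun i => v i ω) j).2 (z (iSel j ω) ω)
          = v (iSel j ω) ω ∧
        ∀ i : ℕ, (softLT g (fun i' => z i' ω) (fun i' => v i' ω) j).2 (z i ω) = v i ω →
          i = iSel j ω)
    (ζ : ℝ) (hζ : 0 < ζ) :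
    Q {ω | ∀ x : E, (softLT g (fun i => z i ω) (fun i => v i ω) J).2 x ≤ ζ}
      ≤ Q {ω | ∀ y : E,
          (Nat.card {a : Fin J // z (iSel (a.1 + 1) ω) ω = y} : ℕ∞)
            ≤ {i : ℕ | v i ω < ζ ∧ z i ω = y}.encard} := by
  classical
  -- a.s. facts
  have hSelAll : ∀ᵐ ω ∂Q, ∀ j : ℕ, 1 ≤ j → j ≤ J →
      (softLT g (fun i => z i ω) (fun i => v i ω) j).2 (z (iSel j ω) ω) = v (iSel j ω) ω ∧
        ∀ i : ℕ, (softLT g (fun i' => z i' ω) (fun i' => v i' ω) j).2 (z i ω) = v i ω →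
          i = iSel j ω := by
    rw [MeasureTheory.ae_all_iff]
    intro j
    by_cases h1 : 1 ≤ j
    · by_cases h2 : j ≤ J
      · exact (hSel j h1 h2).mono fun ω h => fun _ _ => h
      · exact Filter.Eventually.of_forall fun ω h1' h2' => absurd h2' h2
    · exact Filter.Eventually.of_forall fun ω h1' _ => absurd h1' h1
  have hexAll : ∀ᵐ ω ∂Q, ∀ j : ℕ, 1 ≤ j → j ≤ J →
      ∃ t : ℝ, 0 ≤ t ∧ (j : ℕ∞) ≤ {i : ℕ | v i ω ≤ t * g j (z i ω)}.encard := by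
    rw [MeasureTheory.ae_all_iff]
    intro j
    by_cases h1 : 1 ≤ j
    · by_cases h2 : j ≤ J
      · exact (ae_count_exists hppp.meas_z hppp.meas_v hppp.count (hg j) (hg1 j h1) j).mono
          fun ω h => fun _ _ => h
      · exact Filter.Eventually.of_forall fun ω h1' h2' => absurd h2' h2
    · exact Filter.Eventually.of_forall fun ω h1' _ => absurd h1' h1
  have hζneAE : ∀ᵐ ω ∂Q, ∀ i, v i ω ≠ ζ :=
    ae_ne_zeta hppp.meas_z hppp.meas_v hppp.count ζ
  -- a.s. finiteness of points below deterministic curves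
  have hP1AE : ∀ᵐ ω ∂Q, ∀ M : ℕ,
      {i : ℕ | (z i ω, v i ω) ∈
        {p : E × ℝ | 0 ≤ p.2 ∧ p.2 ≤ (M : ℝ) * ∑ k ∈ Finset.Icc 1 J, g k p.1}}.Finite := by
    rw [MeasureTheory.ae_all_iff]
    intro M
    have hcmeas : Measurable fun x : E => (M : ℝ) * ∑ k ∈ Finset.Icc 1 J, g k x :=
      measurable_const.mul (Finset.measurable_sum _ fun k _ => hg k)
    refine ae_count_finite hppp.meas_z hppp.meas_v hppp.count
      (MeasurableSet.inter (measurableSet_le measurable_const measurable_snd)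
        (measurableSet_le measurable_snd (hcmeas.comp measurable_fst))) ?_
    rw [prod_curve_measure μ hcmeas]
    have h1 : ∀ x : E, ENNReal.ofReal ((M : ℝ) * ∑ k ∈ Finset.Icc 1 J, g k x)
        = ENNReal.ofReal (M : ℝ) * ∑ k ∈ Finset.Icc 1 J, ENNReal.ofReal (g k x) := by
      intro x
      rw [ENNReal.ofReal_mul (Nat.cast_nonneg M),
        ENNReal.ofReal_sum_of_nonneg fun k _ => hg0 k x]
    rw [lintegral_congr h1, lintegral_const_mul _
      (Finset.measurable_sum _ fun k _ => (hg k).ennreal_ofReal)]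
    rw [lintegral_finset_sum _ fun k _ => (hg k).ennreal_ofReal]
    rw [Finset.sum_congr rfl fun k hk => hg1 k (Finset.mem_Icc.1 hk).1]
    simp only [Finset.sum_const, nsmul_eq_mul, mul_one]
    exact ENNReal.mul_lt_top ENNReal.ofReal_lt_top (ENNReal.natCast_lt_top _)
  have hAE : ∀ᵐ ω ∂Q,
      (∀ x : E, (softLT g (fun i => z i ω) (fun i => v i ω) J).2 x ≤ ζ) →
      (∀ y : E, (Nat.card {a : Fin J // z (iSel (a.1 + 1) ω) ω = y} : ℕ∞)
            ≤ {i : ℕ | v i ω < ζ ∧ z i ω = y}.encard) := by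
    filter_upwards [hppp.nonneg, hSelAll, hexAll, hζneAE, hP1AE]
      with ω h0 hsel hex hζne hfin
    intro hmem y
    have hfin' : ∀ j, 1 ≤ j → j ≤ J → ∀ t : ℝ, 0 ≤ t →
        {i : ℕ | v i ω ≤ t * g j (z i ω)
          + (softLT g (fun i => z i ω) (fun i => v i ω) (j-1)).2 (z i ω)}.Finite := by
      intro j hj1 hjJ t ht
      set zz : ℕ → E := fun i => z i ω with hzz
      set vv : ℕ → ℝ := fun i => v i ω with hvv
      set c : ℝ := t + ∑ k ∈ Finset.Icc 1 J, (softLT g zz vv k).1 with hc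
      have hc0 : 0 ≤ c := add_nonneg ht
        (Finset.sum_nonneg fun k _ => softLT_xi_nonneg g zz vv k)
      obtain ⟨M, hM⟩ := exists_nat_ge c
      refine (hfin M).subset ?_
      intro i hi
      simp only [Set.mem_setOf_eq] at hi ⊢
      refine ⟨h0 i, ?_⟩
      have hGb : (softLT g zz vv (j-1)).2 (zz i) ≤ c * ∑ k ∈ Finset.Icc 1 (j-1), g k (zz i) := by
        refine softLT_G_bound g zz vv hg0 hc0 (j-1) (fun k hk1 hk2 => ?_) (zz i)
        rw [hc]
        have hkJ : k ∈ Finset.Icc 1 J := Finset.mem_Icc.2 ⟨hk1, by omega⟩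
        have := Finset.single_le_sum (f := fun k => (softLT g zz vv k).1)
          (fun k _ => softLT_xi_nonneg g zz vv k) hkJ
        linarith
      have hsumxi : (0:ℝ) ≤ ∑ k ∈ Finset.Icc 1 J, (softLT g zz vv k).1 :=
        Finset.sum_nonneg fun k _ => softLT_xi_nonneg g zz vv k
      have htM : t ≤ (M : ℝ) := by
        rw [hc] at hM
        linarith
      have hcM : c ≤ (M : ℝ) := hM
      have hsum1 : c * ∑ k ∈ Finset.Icc 1 (j-1), g k (zz i)
          ≤ (M : ℝ) * ∑ k ∈ Finset.Icc 1 (j-1), g k (zz i) :=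
        mul_le_mul_of_nonneg_right hcM (Finset.sum_nonneg fun k _ => hg0 k _)
      have htg : t * g j (zz i) ≤ (M : ℝ) * g j (zz i) :=
        mul_le_mul_of_nonneg_right htM (hg0 j _)
      have hjnot : j ∉ Finset.Icc 1 (j-1) := by
        simp only [Finset.mem_Icc]
        omega
      have hins : (M : ℝ) * g j (zz i) + (M : ℝ) * ∑ k ∈ Finset.Icc 1 (j-1), g k (zz i)
          = (M : ℝ) * ∑ k ∈ insert j (Finset.Icc 1 (j-1)), g k (zz i) := by
        rw [Finset.sum_insert hjnot]
        ring
      have hsub2 : insert j (Finset.Icc 1 (j-1)) ⊆ Finset.Icc 1 J := by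
        intro k hk
        simp only [Finset.mem_insert, Finset.mem_Icc] at hk ⊢
        omega
      have hfinal : (M : ℝ) * ∑ k ∈ insert j (Finset.Icc 1 (j-1)), g k (zz i)
          ≤ (M : ℝ) * ∑ k ∈ Finset.Icc 1 J, g k (zz i) :=
        mul_le_mul_of_nonneg_left
          (Finset.sum_le_sum_of_subset_of_nonneg hsub2 fun k _ _ => hg0 k _)
          (Nat.cast_nonneg M)
      have hvi : vv i ≤ t * g j (zz i) + (softLT g zz vv (j-1)).2 (zz i) := hi
      calc v i ω ≤ t * g j (zz i) + (softLT g zz vv (j-1)).2 (zz i) := hvi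
        _ ≤ (M : ℝ) * g j (zz i) + (M : ℝ) * ∑ k ∈ Finset.Icc 1 (j-1), g k (zz i) := by
            linarith
        _ = (M : ℝ) * ∑ k ∈ insert j (Finset.Icc 1 (j-1)), g k (zz i) := hins
        _ ≤ (M : ℝ) * ∑ k ∈ Finset.Icc 1 J, g k (zz i) := hfinal
    exact softLT_main_det g (fun i => z i ω) (fun i => v i ω) hg0
      (iSel := fun j => iSel j ω) h0 hfin' hex hsel hζne hmem y
  exact measure_mono_ae hAE
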